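/- arXiv:1110.0284 — 2 statements merged into one kernel-verified Lean document; each statement's English description precedes it below -/
import Mathlib

section
/- For every s with 0 < s ≤ 1 there exists a constant C such that for every positive integer n and all z, w ∈ ℂ with |z| ≤ 1 + s/√n and |w| ≤ 1 + s/√n, the Ginibre correlation kernel satisfies |K_n(z,w)| ≤ C·n/(1 + √n·|z−w|). -/
open Finset Real Complex


lemma aux_step {r : ℝ} (i : ℕ) :
    r ^ (i+1) / (i+1).factorial = (r ^ i / i.factorial) * (r / (i+1)) := by
  rw [Nat.factorial_succ]
  push_cast
  have h1 : ((i:ℝ) + 1) ≠ 0 := by positivity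
  have h2 : ((i.factorial : ℝ)) ≠ 0 := by exact_mod_cast i.factorial_ne_zero
  field_simp
  ring

lemma aux_max {r : ℝ} (hr : 1 ≤ r) (k : ℕ) :
    r ^ k / k.factorial ≤ Real.exp 4 * Real.exp r / Real.sqrt r := by
  have hr0 : (0:ℝ) < r := lt_of_lt_of_le one_pos hr
  set a : ℕ → ℝ := fun k => r ^ k / k.factorial with ha
  have hapos : ∀ k, 0 < a k := fun k => by positivity
  have hstep : ∀ i : ℕ, a (i+1) = a i * (r / (i+1)) := fun i => aux_step i
  have hsq : Real.sqrt r * Real.sqrt r = r := Real.mul_self_sqrt hr0.le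
  have hsr1 : 1 ≤ Real.sqrt r := by nlinarith [Real.sqrt_nonneg r]
  have hsrr : Real.sqrt r ≤ r := by nlinarith [Real.sqrt_nonneg r]
  have caseA : ∀ k : ℕ, (k : ℝ) ≤ r → a k ≤ Real.exp 4 * Real.exp r / Real.sqrt r := by
    intro k hk
    set m := ⌈Real.sqrt r⌉₊ with hm
    have hm1 : Real.sqrt r ≤ m := Nat.le_ceil _
    have hm2 : (m : ℝ) ≤ Real.sqrt r + 1 := le_of_lt (Nat.ceil_lt_add_one (Real.sqrt_nonneg r))
    have hm0 : (0:ℝ) ≤ m := Nat.cast_nonneg m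
    have hm4 : (m:ℝ)^2 ≤ 4 * r := by nlinarith
    have hrm : (0:ℝ) < r + m := by positivity
    have claim : ∀ j : ℕ, j ≤ m → a k * (r/(r+m))^j ≤ a (k+j) := by
      intro j hj
      induction j with
      | zero => simp
      | succ j ih =>
        have hj' : j ≤ m := le_of_lt (Nat.lt_of_succ_le hj)
        have h1 : a k * (r/(r+m))^j ≤ a (k+j) := ih hj'
        have h2 := hstep (k+j)
        push_cast at h2
        have h3 : r/(r+(m:ℝ)) ≤ r/((k:ℝ)+j+1) := by
          apply div_le_div_of_nonneg_left hr0.le (by positivity)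
          have : (j:ℝ) + 1 ≤ m := by exact_mod_cast hj
          linarith
        calc a k * (r/(r+m))^(j+1) = (a k * (r/(r+m))^j) * (r/(r+m)) := by ring
          _ ≤ a (k+j) * (r/((k:ℝ)+j+1)) := by
              apply mul_le_mul h1 h3 (by positivity) (hapos _).le
          _ = a (k + (j+1)) := by rw [show k + (j+1) = (k+j)+1 from rfl, h2]
    have hsum : ((m:ℝ) + 1) * (a k * (r/(r+m))^m) ≤ Real.exp r := by
      have hb0 : (0:ℝ) ≤ r/(r+m) := by positivity
      have hb1 : r/(r+(m:ℝ)) ≤ 1 := by rw [div_le_one hrm]; linarith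
      have h1 : ∀ j ∈ range (m+1), a k * (r/(r+m))^m ≤ a (k+j) := by
        intro j hj
        rw [mem_range] at hj
        have hj' : j ≤ m := Nat.lt_succ_iff.mp hj
        refine le_trans ?_ (claim j hj')
        exact mul_le_mul_of_nonneg_left (pow_le_pow_of_le_one hb0 hb1 hj') (hapos k).le
      have h2 : ∑ j ∈ range (m+1), a (k+j) ≤ Real.exp r := by
        refine le_trans ?_ (Real.sum_le_exp_of_nonneg hr0.le (k+m+1))
        have he : ∑ i ∈ Finset.Ico k (k+m+1), a i = ∑ j ∈ range (m+1), a (k+j) := by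
          rw [Finset.sum_Ico_eq_sum_range, show k+m+1-k = m+1 from by omega]
        rw [← he]
        refine Finset.sum_le_sum_of_subset_of_nonneg ?_ (fun i _ _ => (hapos i).le)
        intro i hi
        rw [Finset.mem_Ico] at hi; rw [Finset.mem_range]; omega
      calc ((m:ℝ)+1) * (a k * (r/(r+m))^m) = ∑ _j ∈ range (m+1), a k * (r/(r+m))^m := by
            rw [Finset.sum_const, Finset.card_range]; push_cast; ring
        _ ≤ ∑ j ∈ range (m+1), a (k+j) := Finset.sum_le_sum h1
        _ ≤ Real.exp r := h2
    have hexp : Real.exp (-4) ≤ (r/(r+m))^m := by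
      have h1 : (r+(m:ℝ))/r ≤ Real.exp ((m:ℝ)/r) := by
        calc (r+(m:ℝ))/r = (m:ℝ)/r + 1 := by field_simp; ring
          _ ≤ _ := Real.add_one_le_exp ((m:ℝ)/r)
      have h2 : Real.exp (-((m:ℝ)/r)) ≤ r/(r+m) := by
        rw [Real.exp_neg, inv_le_comm₀ (Real.exp_pos _) (by positivity), inv_div]
        exact h1
      have h3 : Real.exp (-((m:ℝ)/r))^m ≤ (r/(r+m))^m :=
        pow_le_pow_left₀ (Real.exp_pos _).le h2 m
      refine le_trans ?_ h3
      rw [← Real.exp_nat_mul]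
      apply Real.exp_le_exp.2
      have h4 : (m:ℝ)^2 / r ≤ 4 := by rw [div_le_iff₀ hr0]; linarith
      have h5 : (m:ℝ) * -((m:ℝ)/r) = -((m:ℝ)^2/r) := by ring
      rw [h5]; linarith
    have hsp : 0 < Real.sqrt r := lt_of_lt_of_le one_pos hsr1
    have hcomb : Real.sqrt r * (Real.exp (-4) * a k) ≤ Real.exp r := by
      calc Real.sqrt r * (Real.exp (-4) * a k) ≤ ((m:ℝ)+1) * ((r/(r+m))^m * a k) := by
            apply mul_le_mul (by linarith) (mul_le_mul_of_nonneg_right hexp (hapos k).le)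
              (by positivity) (by positivity)
        _ = ((m:ℝ)+1) * (a k * (r/(r+m))^m) := by ring
        _ ≤ Real.exp r := hsum
    rw [le_div_iff₀ hsp]
    have e4 : Real.exp 4 * Real.exp (-4) = 1 := by
      rw [← Real.exp_add]; norm_num
    calc a k * Real.sqrt r = (Real.exp 4 * Real.exp (-4)) * (a k * Real.sqrt r) := by
          rw [e4]; ring
      _ = Real.exp 4 * (Real.sqrt r * (Real.exp (-4) * a k)) := by ring
      _ ≤ Real.exp 4 * Real.exp r := mul_le_mul_of_nonneg_left hcomb (Real.exp_pos 4).le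
  rcases le_or_gt (k:ℝ) r with hk | hk
  · exact caseA k hk
  · have hfloor : (⌊r⌋₊ : ℝ) ≤ r := Nat.floor_le hr0.le
    have hdec : ∀ i : ℕ, ⌊r⌋₊ ≤ i → a i ≤ a ⌊r⌋₊ := by
      intro i hi
      induction i, hi using Nat.le_induction with
      | base => exact le_rfl
      | succ i hi ih =>
        have hii : (⌊r⌋₊:ℝ) ≤ i := Nat.cast_le.mpr hi
        have hlt : r < (⌊r⌋₊:ℝ) + 1 := Nat.lt_floor_add_one r
        have hle1 : r/((i:ℝ)+1) ≤ 1 := by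
          rw [div_le_one (by positivity)]; linarith
        calc a (i+1) = a i * (r/((i:ℝ)+1)) := by rw [hstep i]
          _ ≤ a i * 1 := mul_le_mul_of_nonneg_left hle1 (hapos i).le
          _ = a i := by ring
          _ ≤ a ⌊r⌋₊ := ih
    have hk' : ⌊r⌋₊ ≤ k := by
      have : (⌊r⌋₊:ℝ) < k := lt_of_le_of_lt hfloor hk
      exact_mod_cast this.le
    show a k ≤ _
    exact le_trans (hdec k hk') (caseA ⌊r⌋₊ hfloor)


lemma geom_partial_bound {θ : ℝ} (h0 : θ ≠ 0) (hπ : |θ| ≤ π) (k : ℕ) :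
    ‖∑ j ∈ Finset.range k, Complex.exp (θ * Complex.I) ^ j‖ ≤ π / |θ| := by
  set q : ℂ := Complex.exp (θ * Complex.I) with hq
  have habs : ‖q‖ = 1 := Complex.norm_exp_ofReal_mul_I θ
  have hq1 : q ≠ 1 := by
    intro h
    rw [hq, Complex.exp_eq_one_iff] at h
    obtain ⟨n, hn⟩ := h
    have hI : (Complex.I : ℂ) ≠ 0 := Complex.I_ne_zero
    have hθr : θ = (n:ℝ) * (2 * π) := by
      have him := congrArg Complex.im hn
      simpa using him
    have hn0 : n ≠ 0 := by
      intro h0'; rw [h0'] at hθr; simp at hθr; exact h0 hθr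
    have h1 : (1:ℝ) ≤ |(n:ℝ)| := by
      have := Int.one_le_abs hn0
      exact_mod_cast this
    rw [hθr, abs_mul] at hπ
    have hππ : |2 * π| = 2 * π := abs_of_pos (by positivity)
    rw [hππ] at hπ
    nlinarith [Real.pi_pos]
  have hdenom : 2 * |θ| / π ≤ ‖q - 1‖ := by
    have hre : q.re = Real.cos θ := by
      rw [hq]; simp [Complex.exp_ofReal_mul_I_re]
    have hsq : ‖q - 1‖ ^ 2 = 2 - 2 * Real.cos θ := by
      rw [Complex.sq_norm, Complex.normSq_sub]
      simp [Complex.normSq_eq_norm_sq, habs, hre]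
      ring
    have hcos : Real.cos θ ≤ 1 - 2 / π ^ 2 * θ ^ 2 := Real.cos_le_one_sub_mul_cos_sq hπ
    have hπ0 : (0:ℝ) < π := Real.pi_pos
    have h1 : (2 * |θ| / π) ^ 2 ≤ ‖q - 1‖ ^ 2 := by
      rw [hsq]
      have heq : (2 * |θ| / π)^2 = 4 * θ^2 / π^2 := by
        rw [div_pow, mul_pow, _root_.sq_abs]; norm_num
      rw [heq, div_le_iff₀ (by positivity)]
      have hX : (1 - 2/π^2*θ^2) * π^2 = π^2 - 2*θ^2 := by field_simp
      have hY := mul_le_mul_of_nonneg_right hcos (sq_nonneg π)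
      rw [hX] at hY
      nlinarith [hY]
    calc 2 * |θ| / π = Real.sqrt ((2 * |θ| / π)^2) := (Real.sqrt_sq (by positivity)).symm
      _ ≤ Real.sqrt (‖q - 1‖^2) := Real.sqrt_le_sqrt h1
      _ = ‖q - 1‖ := Real.sqrt_sq (norm_nonneg _)
  have hnum : ‖q ^ k - 1‖ ≤ 2 := by
    calc ‖q ^ k - 1‖ ≤ ‖q ^ k‖ + ‖(1:ℂ)‖ :=
          (norm_sub_le _ _)
      _ = 1 + 1 := by rw [norm_pow, habs]; simp
      _ = 2 := by norm_num
  rw [geom_sum_eq hq1, norm_div]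
  have hθ0 : 0 < |θ| := abs_pos.mpr h0
  have hd0 : 0 < 2 * |θ| / π := by positivity
  calc ‖q^k - 1‖ / ‖q - 1‖ ≤ 2 / (2 * |θ| / π) :=
        div_le_div₀ (by norm_num) hnum hd0 hdenom
    _ = π / |θ| := by field_simp

lemma abel_bound (N : ℕ) (hN : 1 ≤ N) (ζ : ℂ) (hr : 1 ≤ ‖ζ‖)
    (hθ : Complex.arg ζ ≠ 0) :
    ‖∑ k ∈ Finset.range N, ζ ^ k / (k.factorial : ℂ)‖ ≤
      (3 * (Real.exp 4 * Real.exp (‖ζ‖) / Real.sqrt (‖ζ‖))) *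
        (π / |Complex.arg ζ|) := by
  set r : ℝ := ‖ζ‖ with hrdef
  set θ : ℝ := Complex.arg ζ with hθdef
  have hr0 : (0:ℝ) < r := lt_of_lt_of_le one_pos hr
  set a : ℕ → ℝ := fun k => r ^ k / k.factorial with ha
  have hapos : ∀ k, 0 < a k := fun k => by positivity
  have hstep : ∀ i : ℕ, a (i+1) = a i * (r / (i+1)) := fun i => aux_step i
  set q : ℂ := Complex.exp (θ * Complex.I) with hq
  set B : ℝ := Real.exp 4 * Real.exp r / Real.sqrt r with hB
  have hBpos : 0 < B := by
    have : (0:ℝ) < Real.sqrt r := Real.sqrt_pos.mpr hr0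
    positivity
  have haB : ∀ k, a k ≤ B := fun k => aux_max hr k
  have hπθ : |θ| ≤ π := Complex.abs_arg_le_pi ζ
  have hgeom : ∀ k : ℕ, ‖∑ j ∈ Finset.range k, q ^ j‖ ≤ π / |θ| :=
    fun k => geom_partial_bound hθ hπθ k
  -- rewrite the sum
  have hterm : ∀ k : ℕ, ζ ^ k / (k.factorial : ℂ) = ((a k : ℝ) : ℂ) * q ^ k := by
    intro k
    have hζ : ((r:ℝ) : ℂ) * q = ζ := Complex.norm_mul_exp_arg_mul_I ζ
    rw [← hζ, mul_pow, ha]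
    push_cast
    ring
  have hsum : (∑ k ∈ Finset.range N, ζ ^ k / (k.factorial : ℂ)) =
      ∑ k ∈ Finset.range N, ((a k : ℝ) : ℂ) * q ^ k := Finset.sum_congr rfl (fun k _ => hterm k)
  rw [hsum]
  -- Abel summation
  have habel := Finset.sum_range_by_parts (fun k => ((a k : ℝ) : ℂ)) (fun k => q ^ k) N
  simp only [smul_eq_mul] at habel
  rw [habel]
  -- bound
  have hG : ∀ k : ℕ, ‖∑ j ∈ Finset.range k, q ^ j‖ ≤ π / |θ| := hgeom
  have hπθpos : 0 < π / |θ| := by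
    have : 0 < |θ| := abs_pos.mpr hθ
    positivity
  have hTV : a (N-1) + ∑ i ∈ Finset.range (N-1), |a (i+1) - a i| ≤ 3 * B := by
    have hinc : ∀ i : ℕ, ((i:ℝ)+1) ≤ r → |a (i+1) - a i| = a (i+1) - a i := by
      intro i hi
      have h1 : (1:ℝ) ≤ r/((i:ℝ)+1) := by rw [le_div_iff₀ (by positivity)]; linarith
      have : a i ≤ a (i+1) := by
        rw [hstep i]
        nlinarith [hapos i, h1]
      rw [_root_.abs_of_nonneg (by linarith : (0:ℝ) ≤ a (i+1) - a i)]
    have hdecr : ∀ i : ℕ, r ≤ ((i:ℝ)+1) → |a (i+1) - a i| = a i - a (i+1) := by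
      intro i hi
      have h1 : r/((i:ℝ)+1) ≤ 1 := by rw [div_le_one (by positivity)]; linarith
      have : a (i+1) ≤ a i := by
        rw [hstep i]
        nlinarith [hapos i, h1]
      rw [abs_of_nonpos (by linarith : a (i+1) - a i ≤ (0:ℝ))]
      ring
    have hfl : (⌊r⌋₊:ℝ) ≤ r := Nat.floor_le hr0.le
    have hfl1 : r < (⌊r⌋₊:ℝ) + 1 := Nat.lt_floor_add_one r
    rcases le_or_gt (N-1) ⌊r⌋₊ with hc | hc
    · have he : ∀ i ∈ Finset.range (N-1), |a (i+1) - a i| = a (i+1) - a i := by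
        intro i hi
        rw [Finset.mem_range] at hi
        apply hinc
        have : (i:ℝ) + 1 ≤ (⌊r⌋₊:ℝ) := by exact_mod_cast Nat.succ_le_of_lt (lt_of_lt_of_le hi hc)
        linarith
      rw [Finset.sum_congr rfl he, Finset.sum_range_sub a (N-1)]
      have := haB (N-1)
      have := (hapos 0).le
      linarith [hBpos]
    · set m₀ := ⌊r⌋₊ with hm₀
      have hm₀N : m₀ ≤ N - 1 := le_of_lt hc
      have hsplit : ∑ i ∈ Finset.range m₀, |a (i+1) - a i|
          + ∑ i ∈ Finset.Ico m₀ (N-1), |a (i+1) - a i|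
          = ∑ i ∈ Finset.range (N-1), |a (i+1) - a i| :=
        Finset.sum_range_add_sum_Ico _ hm₀N
      have hpart1 : ∑ i ∈ Finset.range m₀, |a (i+1) - a i| = a m₀ - a 0 := by
        have he : ∀ i ∈ Finset.range m₀, |a (i+1) - a i| = a (i+1) - a i := by
          intro i hi
          rw [Finset.mem_range] at hi
          apply hinc
          have : (i:ℝ) + 1 ≤ (m₀:ℝ) := by exact_mod_cast Nat.succ_le_of_lt hi
          linarith
        rw [Finset.sum_congr rfl he, Finset.sum_range_sub a m₀]
      have hpart2 : ∑ i ∈ Finset.Ico m₀ (N-1), |a (i+1) - a i| = a m₀ - a (N-1) := by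
        have he : ∀ i ∈ Finset.Ico m₀ (N-1), |a (i+1) - a i| = a i - a (i+1) := by
          intro i hi
          rw [Finset.mem_Ico] at hi
          apply hdecr
          have : (m₀:ℝ) ≤ (i:ℝ) := by exact_mod_cast hi.1
          linarith
        rw [Finset.sum_congr rfl he, Finset.sum_Ico_eq_sum_range]
        have h2 : ∀ j ∈ Finset.range (N-1-m₀), a (m₀+j) - a (m₀+j+1)
            = (fun j => a (m₀+j)) j - (fun j => a (m₀+j)) (j+1) := by
          intro j _
          show a (m₀+j) - a (m₀+j+1) = a (m₀+j) - a (m₀+(j+1))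
          rfl
        rw [Finset.sum_congr rfl h2, Finset.sum_range_sub' (fun j => a (m₀+j)) (N-1-m₀)]
        show a (m₀+0) - a (m₀+(N-1-m₀)) = a m₀ - a (N-1)
        congr 2
        omega
      rw [← hsplit, hpart1, hpart2]
      have := haB (N-1)
      have := haB m₀
      have := (hapos 0).le
      have := (hapos (N-1)).le
      linarith
  calc ‖_‖ ≤ ‖((a (N-1) : ℝ):ℂ) * ∑ j ∈ Finset.range N, q ^ j‖
        + ‖∑ i ∈ Finset.range (N-1),
            (((a (i+1) : ℝ):ℂ) - ((a i : ℝ):ℂ)) * ∑ j ∈ Finset.range (i+1), q ^ j‖ :=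
        norm_sub_le _ _
    _ ≤ a (N-1) * (π / |θ|) + (∑ i ∈ Finset.range (N-1), |a (i+1) - a i|) * (π / |θ|) := by
        apply add_le_add
        · rw [norm_mul, Complex.norm_real, Real.norm_eq_abs, abs_of_pos (hapos _)]
          exact mul_le_mul_of_nonneg_left (hG N) (hapos _).le
        · refine le_trans (norm_sum_le _ _) ?_
          rw [Finset.sum_mul]
          apply Finset.sum_le_sum
          intro i _
          rw [norm_mul]
          have : ‖((a (i+1) : ℝ):ℂ) - ((a i : ℝ):ℂ)‖ = |a (i+1) - a i| := by
            rw [← Complex.ofReal_sub, Complex.norm_real, Real.norm_eq_abs]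
          rw [this]
          exact mul_le_mul_of_nonneg_left (hG (i+1)) (abs_nonneg _)
    _ = (a (N-1) + ∑ i ∈ Finset.range (N-1), |a (i+1) - a i|) * (π / |θ|) := by ring
    _ ≤ (3 * B) * (π / |θ|) := mul_le_mul_of_nonneg_right hTV hπθpos.le

/-- The Ginibre correlation kernel
`K_n(z,w) = n s_n(n z w̄) e^{−n(|z|²+|w|²)/2}` with `s_n(ζ) = Σ_{k<n} ζ^k/k!`. -/
noncomputable def ginibreKernel (n : ℕ) (z w : ℂ) : ℂ :=
  (n : ℂ) * (∑ k ∈ Finset.range n, ((n : ℂ) * z * (starRingEnd ℂ) w) ^ k / (k.factorial : ℂ)) *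
    Complex.exp (-(n : ℂ) * (((‖z‖ : ℝ) : ℂ) ^ 2 + ((‖w‖ : ℝ) : ℂ) ^ 2) / 2)

set_option maxHeartbeats 1000000 in
/-- Off-diagonal damping for the Ginibre kernel: for `0 < s ≤ 1` there is `C` with
`|K_n(z,w)| ≤ C n / (1 + √n |z − w|)` for all `z, w` in `D(0; 1 + s/√n)`. -/
theorem ginibreKernel_offdiagonal_damping (s : ℝ) (hs0 : 0 < s) (hs1 : s ≤ 1) :
    ∃ C : ℝ, ∀ n : ℕ, 1 ≤ n → ∀ z w : ℂ,
      ‖z‖ ≤ 1 + s / Real.sqrt n → ‖w‖ ≤ 1 + s / Real.sqrt n →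
      ‖ginibreKernel n z w‖ ≤
        C * n / (1 + Real.sqrt n * ‖z - w‖) := by
  refine ⟨2 * (1 + π + 3 * π * Real.exp 4), ?_⟩
  intro n hn z w _ _
  have hn0 : (0:ℝ) < n := by exact_mod_cast hn
  set x : ℝ := ‖z‖ with hx
  set y : ℝ := ‖w‖ with hy
  set d : ℝ := ‖z - w‖ with hd
  set ζ : ℂ := (n : ℂ) * z * (starRingEnd ℂ) w with hζ
  set S : ℂ := ∑ k ∈ Finset.range n, ζ ^ k / (k.factorial : ℂ) with hS
  set r : ℝ := ‖ζ‖ with hrd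
  set θ : ℝ := Complex.arg ζ with hθd
  have hrval : r = n * (x * y) := by
    rw [hrd, hζ, norm_mul, norm_mul, Complex.norm_natCast, Complex.norm_conj, hx, hy]
    ring
  have hx0 : 0 ≤ x := norm_nonneg z
  have hy0 : 0 ≤ y := norm_nonneg w
  have hd0 : 0 ≤ d := norm_nonneg _
  have hr0 : 0 ≤ r := norm_nonneg _
  have hθπ : |θ| ≤ π := Complex.abs_arg_le_pi ζ
  set δ : ℝ := |x - y| with hδ
  set F : ℝ := Real.exp (-(n * (x - y)^2) / 2) with hF
  have hF0 : 0 < F := Real.exp_pos _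
  -- value of |K|
  have hK : ‖ginibreKernel n z w‖
      = n * ‖S‖ * Real.exp (-(n * (x^2 + y^2)) / 2) := by
    rw [ginibreKernel, norm_mul, norm_mul, Complex.norm_natCast]
    congr 1
    have : (-(n : ℂ) * ((x : ℂ) ^ 2 + (y : ℂ) ^ 2) / 2)
        = (((-(n * (x^2 + y^2)) / 2 : ℝ)) : ℂ) := by push_cast; ring
    rw [this, Complex.norm_exp, Complex.ofReal_re]
  set K : ℝ := ‖ginibreKernel n z w‖ with hKd
  have hK0 : 0 ≤ K := norm_nonneg _
  -- trivial bound
  have hS1 : ‖S‖ ≤ Real.exp r := by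
    refine le_trans (norm_sum_le _ _) ?_
    have he : ∀ k ∈ Finset.range n, ‖ζ ^ k / (k.factorial : ℂ)‖
        = r ^ k / k.factorial := by
      intro k _
      rw [norm_div, norm_pow, Complex.norm_natCast]
    rw [Finset.sum_congr rfl he]
    exact Real.sum_le_exp_of_nonneg hr0 n
  have hEF : Real.exp r * Real.exp (-(n * (x^2 + y^2)) / 2) = F := by
    rw [← Real.exp_add, hF, hrval]
    congr 1
    ring
  have h1 : K ≤ n * F := by
    rw [hK, ← hEF]
    have := mul_le_mul_of_nonneg_right hS1 (Real.exp_pos (-(n * (x^2 + y^2)) / 2)).le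
    calc (n:ℝ) * ‖S‖ * Real.exp (-(n * (x^2 + y^2)) / 2)
        = n * (‖S‖ * Real.exp (-(n * (x^2 + y^2)) / 2)) := by ring
      _ ≤ n * (Real.exp r * Real.exp (-(n * (x^2 + y^2)) / 2)) :=
          mul_le_mul_of_nonneg_left this hn0.le
      _ = n * (Real.exp r * Real.exp (-(n * (x^2 + y^2)) / 2)) := rfl
  -- angular bound
  have h2 : K * (Real.sqrt r * |θ|) ≤ (π + 3 * π * Real.exp 4) * (n * F) := by
    have hπpos := Real.pi_pos
    have hRHS0 : 0 ≤ n * F := by positivity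
    by_cases hθ0 : θ = 0
    · rw [hθ0]
      simp
      positivity
    by_cases hr1 : r < 1
    · have hsr : Real.sqrt r ≤ 1 := by
        rw [show (1:ℝ) = Real.sqrt 1 from (Real.sqrt_one).symm]
        exact Real.sqrt_le_sqrt hr1.le
      have : K * (Real.sqrt r * |θ|) ≤ K * (1 * π) := by
        apply mul_le_mul_of_nonneg_left _ hK0
        exact mul_le_mul hsr hθπ (abs_nonneg _) one_pos.le
      refine le_trans this ?_
      rw [one_mul]
      calc K * π = π * K := by ring
        _ ≤ π * (n * F) := mul_le_mul_of_nonneg_left h1 hπpos.le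
        _ ≤ (π + 3 * π * Real.exp 4) * (n * F) := by
            apply mul_le_mul_of_nonneg_right _ hRHS0
            have hpe : (0:ℝ) < 3 * π * Real.exp 4 := by positivity
            linarith
    · push_neg at hr1
      have hθabs : 0 < |θ| := abs_pos.mpr hθ0
      have hsr0 : 0 < Real.sqrt r := Real.sqrt_pos.mpr (by linarith)
      have habel := abel_bound n hn ζ hr1 hθ0
      rw [← hS, ← hrd, ← hθd] at habel
      have hKle : K ≤ n * ((3 * (Real.exp 4 * Real.exp r / Real.sqrt r)) * (π / |θ|))
          * Real.exp (-(n * (x^2 + y^2)) / 2) := by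
        rw [hK]
        apply mul_le_mul_of_nonneg_right _ (Real.exp_pos _).le
        exact mul_le_mul_of_nonneg_left habel hn0.le
      calc K * (Real.sqrt r * |θ|)
          ≤ (n * ((3 * (Real.exp 4 * Real.exp r / Real.sqrt r)) * (π / |θ|))
              * Real.exp (-(n * (x^2 + y^2)) / 2)) * (Real.sqrt r * |θ|) :=
            mul_le_mul_of_nonneg_right hKle (by positivity)
        _ = 3 * π * Real.exp 4 * (n * (Real.exp r * Real.exp (-(n * (x^2 + y^2)) / 2))) := by
            field_simp
        _ = 3 * π * Real.exp 4 * (n * F) := by rw [hEF]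
        _ ≤ (π + 3 * π * Real.exp 4) * (n * F) := by
            apply mul_le_mul_of_nonneg_right _ hRHS0
            linarith [hπpos]
  -- geometric bound
  have h3 : 1 + Real.sqrt n * d ≤ (1 + Real.sqrt n * δ) * (1 + Real.sqrt r * |θ|) := by
    have hre : (n:ℝ) * (z * (starRingEnd ℂ) w).re = r * Real.cos θ := by
      rw [hθd, hrd, Complex.norm_mul_cos_arg, hζ]
      rw [show ((n:ℂ) * z * (starRingEnd ℂ) w) = ((n:ℝ):ℂ) * (z * (starRingEnd ℂ) w) by
        push_cast; ring]
      rw [Complex.re_ofReal_mul]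
    have hdsq : d^2 = x^2 + y^2 - 2 * (x * y) * Real.cos θ := by
      rw [hd, Complex.sq_norm, Complex.normSq_sub, ← Complex.sq_norm z, ← Complex.sq_norm w,
        ← hx, ← hy]
      have hcc : (z * (starRingEnd ℂ) w).re = x * y * Real.cos θ := by
        have h : (n:ℝ) * (z * (starRingEnd ℂ) w).re = (n:ℝ) * (x * y * Real.cos θ) := by
          rw [hre, hrval]; ring
        exact mul_left_cancel₀ (ne_of_gt hn0) h
      rw [hcc]
      ring
    have hcos : 1 - θ^2/2 ≤ Real.cos θ := Real.one_sub_sq_div_two_le_cos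
    have hxy : Real.sqrt (x*y) ^ 2 = x * y := Real.sq_sqrt (by positivity)
    have hth : |θ|^2 = θ^2 := sq_abs θ
    have hδsq : δ^2 = (x - y)^2 := sq_abs _
    have hcross : 0 ≤ δ * (Real.sqrt (x*y) * |θ|) := by positivity
    have hxy' : 0 ≤ x * y := by positivity
    have hprod : x * y * (1 - θ^2/2) ≤ x * y * Real.cos θ :=
      mul_le_mul_of_nonneg_left hcos hxy'
    have e1 : d^2 ≤ δ^2 + (x * y) * θ^2 := by
      rw [hdsq, hδsq]; linarith [hprod]
    have hxyth : (Real.sqrt (x*y) * |θ|)^2 = x * y * θ^2 := by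
      rw [mul_pow, hxy, hth]
    have hdsq2 : d^2 ≤ (δ + Real.sqrt (x*y) * |θ|)^2 := by
      have hexpand : (δ + Real.sqrt (x*y) * |θ|)^2
          = δ^2 + 2 * (δ * (Real.sqrt (x*y) * |θ|)) + (Real.sqrt (x*y) * |θ|)^2 := by ring
      rw [hexpand, hxyth]
      linarith [e1, hcross]
    have hrhs0 : 0 ≤ δ + Real.sqrt (x*y) * |θ| := by positivity
    have hdle : d ≤ δ + Real.sqrt (x*y) * |θ| := by
      calc d = Real.sqrt (d^2) := (Real.sqrt_sq hd0).symm
        _ ≤ Real.sqrt ((δ + Real.sqrt (x*y) * |θ|)^2) := Real.sqrt_le_sqrt hdsq2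
        _ = δ + Real.sqrt (x*y) * |θ| := Real.sqrt_sq hrhs0
    have hsplit : Real.sqrt n * Real.sqrt (x*y) = Real.sqrt r := by
      rw [hrval, Real.sqrt_mul hn0.le]
    have hnd : Real.sqrt n * d ≤ Real.sqrt n * δ + Real.sqrt r * |θ| := by
      have := mul_le_mul_of_nonneg_left hdle (Real.sqrt_nonneg (n:ℝ))
      calc Real.sqrt n * d ≤ Real.sqrt n * (δ + Real.sqrt (x*y) * |θ|) := this
        _ = Real.sqrt n * δ + (Real.sqrt n * Real.sqrt (x*y)) * |θ| := by ring
        _ = Real.sqrt n * δ + Real.sqrt r * |θ| := by rw [hsplit]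
    have hA0 : 0 ≤ Real.sqrt n * δ := by positivity
    have hB0 : 0 ≤ Real.sqrt r * |θ| := by positivity
    have hAB : 0 ≤ (Real.sqrt n * δ) * (Real.sqrt r * |θ|) := mul_nonneg hA0 hB0
    have hexpand : (1 + Real.sqrt n * δ) * (1 + Real.sqrt r * |θ|)
        = 1 + (Real.sqrt n * δ + Real.sqrt r * |θ|)
          + (Real.sqrt n * δ) * (Real.sqrt r * |θ|) := by ring
    rw [hexpand]
    linarith [hnd]
  -- gaussian bound
  have h4 : (1 + Real.sqrt n * δ) * F ≤ 2 := by
    set t : ℝ := Real.sqrt n * δ with ht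
    have ht0 : 0 ≤ t := by positivity
    have htsq : t^2 = n * (x - y)^2 := by
      rw [ht, mul_pow, Real.sq_sqrt hn0.le, hδ, _root_.sq_abs]
    have hFt : F = Real.exp (-(t^2/2)) := by
      rw [hF, htsq]; congr 1; ring
    have hexp := Real.add_one_le_exp (t^2/2)
    have h2e : 1 + t ≤ 2 * Real.exp (t^2/2) := by
      linarith [hexp, sq_nonneg (t-1), ht0]
    rw [hFt, Real.exp_neg]
    rw [mul_inv_le_iff₀ (Real.exp_pos _)]
    linarith
  -- conclusion
  have hden : 0 < 1 + Real.sqrt n * d := by positivity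
  rw [le_div_iff₀ hden]
  calc K * (1 + Real.sqrt n * d)
      ≤ K * ((1 + Real.sqrt n * δ) * (1 + Real.sqrt r * |θ|)) :=
        mul_le_mul_of_nonneg_left h3 hK0
    _ = (1 + Real.sqrt n * δ) * (K + K * (Real.sqrt r * |θ|)) := by ring
    _ ≤ (1 + Real.sqrt n * δ) * (n * F + (π + 3 * π * Real.exp 4) * (n * F)) := by
        apply mul_le_mul_of_nonneg_left (add_le_add h1 h2) (by positivity)
    _ = (1 + π + 3 * π * Real.exp 4) * ((1 + Real.sqrt n * δ) * F) * n := by ring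
    _ ≤ (1 + π + 3 * π * Real.exp 4) * 2 * n := by
        have hc0 : 0 ≤ 1 + π + 3 * π * Real.exp 4 := by positivity
        have := mul_le_mul_of_nonneg_left h4 hc0
        exact mul_le_mul_of_nonneg_right this hn0.le
    _ = 2 * (1 + π + 3 * π * Real.exp 4) * n := by ring
end

section
/- For every M ≥ 1 there exist δ > 0 and a constant C such that for every positive integer n and all z, w ∈ ℂ with |z| ≤ 2, |w| ≤ 2 and M/√n ≤ |z·conj(w) − 1| ≤ δ, the Ginibre correlation kernel satisfies |K_n(z,w)| ≤ C·n·( e^{−n|z−w|²/2} + 1/(1 + √n·|z·conj(w) − 1|) ). -/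
open Finset

lemma geom_partial_bound_s15 {q : ℂ} (hq : ‖q‖ ≤ 1) {e : ℝ} (he : 0 < e)
    (hqe : e ≤ ‖q - 1‖) (m : ℕ) : ‖∑ j ∈ range m, q ^ j‖ ≤ 2 / e := by
  have hq1 : q ≠ 1 := by
    intro h; rw [h] at hqe; simp at hqe; linarith
  rw [geom_sum_eq hq1, norm_div]
  have h2 : ‖q ^ m - 1‖ ≤ 2 := by
    calc ‖q ^ m - 1‖ ≤ ‖q ^ m‖ + ‖(1:ℂ)‖ := norm_sub_le _ _
      _ ≤ 1 + 1 := by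
          rw [norm_pow, norm_one]
          have := pow_le_one₀ (norm_nonneg q) hq (n := m)
          linarith
      _ = 2 := by norm_num
  exact div_le_div₀ (by norm_num) h2 he hqe

lemma abel_bound_s15 (c : ℕ → ℝ) (hmono : ∀ j, c (j + 1) ≤ c j) (hnn : ∀ j, 0 ≤ c j)
    (q : ℂ) (B : ℝ) (hB : ∀ m : ℕ, ‖∑ j ∈ range m, q ^ j‖ ≤ B) (N : ℕ) :
    ‖∑ j ∈ range N, (c j : ℂ) * q ^ j‖ ≤ c 0 * B := by
  have hB0 : 0 ≤ B := le_trans (norm_nonneg _) (hB 0)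
  rcases Nat.eq_zero_or_pos N with hN | hN
  · simp [hN]; exact mul_nonneg (hnn 0) hB0
  have h := Finset.sum_range_by_parts (fun i => ((c i : ℂ))) (fun i => q ^ i) N
  simp only [smul_eq_mul] at h
  rw [h]
  have key : ∀ i, ‖((c (i+1) : ℂ) - (c i : ℂ)) * ∑ j ∈ range (i+1), q ^ j‖
      ≤ (c i - c (i+1)) * B := by
    intro i
    rw [norm_mul, ← Complex.ofReal_sub, Complex.norm_real, Real.norm_eq_abs]
    have := hB (i+1)
    have h1 : 0 ≤ c i - c (i+1) := by linarith [hmono i]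
    have h2 : |c (i+1) - c i| = c i - c (i+1) := by rw [abs_sub_comm, abs_of_nonneg h1]
    rw [h2]; gcongr
  calc ‖(c (N-1) : ℂ) * ∑ j ∈ range N, q ^ j -
        ∑ i ∈ range (N-1), ((c (i+1) : ℂ) - c i) * ∑ j ∈ range (i+1), q ^ j‖
      ≤ ‖(c (N-1) : ℂ) * ∑ j ∈ range N, q ^ j‖ +
        ‖∑ i ∈ range (N-1), ((c (i+1) : ℂ) - c i) * ∑ j ∈ range (i+1), q ^ j‖ :=
        norm_sub_le _ _
    _ ≤ c (N-1) * B + ∑ i ∈ range (N-1), (c i - c (i+1)) * B := by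
        gcongr
        · rw [norm_mul, Complex.norm_real, Real.norm_eq_abs, abs_of_nonneg (hnn _)]
          gcongr
          · exact hnn _
          · exact hB N
        · exact le_trans (norm_sum_le _ _) (Finset.sum_le_sum fun i _ => key i)
    _ = c (N-1) * B + (c 0 - c (N-1)) * B := by rw [← Finset.sum_mul, Finset.sum_range_sub']
    _ = c 0 * B := by ring

lemma factorial_lower (n : ℕ) (hn : 1 ≤ n) :
    Real.sqrt n * ((n:ℝ) / Real.exp 1) ^ n ≤ n.factorial := by
  have hpi : Real.sqrt Real.pi ≤ Stirling.stirlingSeq n := by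
    obtain ⟨m, rfl⟩ : ∃ m, n = m + 1 := ⟨n - 1, by omega⟩
    have hlim : Filter.Tendsto (Stirling.stirlingSeq ∘ Nat.succ) Filter.atTop (nhds (Real.sqrt Real.pi)) := by
      apply Stirling.tendsto_stirlingSeq_sqrt_pi.comp
      exact Filter.tendsto_add_atTop_nat 1
    exact Stirling.stirlingSeq'_antitone.le_of_tendsto hlim m
  have h1 : (1:ℝ) ≤ Real.sqrt Real.pi := by
    rw [show (1:ℝ) = Real.sqrt 1 by simp]
    exact Real.sqrt_le_sqrt (by linarith [Real.pi_gt_three])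
  rw [Stirling.stirlingSeq] at hpi
  have hd : 0 < Real.sqrt (2 * n) * ((n:ℝ) / Real.exp 1) ^ n := by
    have : (0:ℝ) < n := by exact_mod_cast hn
    positivity
  have h2 : Real.sqrt (2 * n) * ((n:ℝ) / Real.exp 1) ^ n ≤ n.factorial := by
    have := (le_div_iff₀ hd).mp hpi
    nlinarith [hd]
  refine le_trans ?_ h2
  have : Real.sqrt n ≤ Real.sqrt (2 * n) := Real.sqrt_le_sqrt (by linarith [show (0:ℝ) ≤ n by positivity])
  have hp : (0:ℝ) ≤ ((n:ℝ) / Real.exp 1) ^ n := by positivity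
  nlinarith

lemma tail_bound (n : ℕ) (ζ₀ : ℂ) (hr : ‖ζ₀‖ ≤ 1) {e : ℝ} (he : 0 < e)
    (hqe : e ≤ ‖ζ₀ - 1‖) :
    ‖Complex.exp ((n:ℂ) * ζ₀) - ∑ k ∈ range n, ((n:ℂ) * ζ₀) ^ k / (k.factorial : ℂ)‖ ≤
      ((n:ℝ) * ‖ζ₀‖) ^ n / n.factorial * (2 / e) := by
  set ζ : ℂ := (n:ℂ) * ζ₀ with hζ
  set f : ℕ → ℂ := fun k => ζ ^ k / (k.factorial : ℂ) with hf
  have hsum : Summable f := NormedSpace.expSeries_div_summable ζ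
  have hexp : Complex.exp ζ = ∑' k, f k := by
    rw [Complex.exp_eq_exp_ℂ, NormedSpace.exp_eq_tsum_div]
  have hsplit := Summable.sum_add_tsum_nat_add n hsum
  have hdiff : Complex.exp ζ - ∑ k ∈ range n, f k = ∑' j, f (j + n) := by
    rw [hexp, ← hsplit]; ring
  rw [hdiff]
  have htail : Summable fun j => f (j + n) := (summable_nat_add_iff n).mpr hsum
  have hten := (htail.hasSum.tendsto_sum_nat).norm
  refine le_of_tendsto' hten fun N => ?_
  -- partial sums
  set c : ℕ → ℝ := fun j => (n.factorial : ℝ) * (n:ℝ) ^ j / ((j + n).factorial : ℝ) with hc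
  have hcmono : ∀ j, c (j + 1) ≤ c j := by
    intro j
    rw [hc]
    simp only
    rw [div_le_div_iff₀ (by positivity) (by positivity)]
    have h1 : ((j + 1 + n).factorial : ℝ) = ((j + n : ℕ) + 1) * ((j+n).factorial : ℝ) := by
      rw [show j + 1 + n = (j + n) + 1 by omega, Nat.factorial_succ]; push_cast; ring
    rw [h1]
    have h2 : (n:ℝ) ≤ ((j + n : ℕ) : ℝ) + 1 := by push_cast; linarith [show (0:ℝ) ≤ (j:ℝ) by positivity]
    have h3 : (0:ℝ) ≤ (n.factorial : ℝ) * (n:ℝ) ^ j := by positivity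
    calc (n.factorial : ℝ) * (n:ℝ)^(j+1) * ((j+n).factorial : ℝ)
        = ((n.factorial : ℝ) * (n:ℝ)^j * ((j+n).factorial : ℝ)) * (n:ℝ) := by ring
      _ ≤ ((n.factorial : ℝ) * (n:ℝ)^j * ((j+n).factorial : ℝ)) * (((j + n : ℕ) : ℝ) + 1) :=
          mul_le_mul_of_nonneg_left h2 (by positivity)
      _ = (n.factorial : ℝ) * (n:ℝ)^j * ((((j + n:ℕ):ℝ) + 1) * ((j+n).factorial : ℝ)) := by ring
  have hcnn : ∀ j, 0 ≤ c j := fun j => by rw [hc]; positivity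
  have hc0 : c 0 = 1 := by
    rw [hc]; simp [Nat.factorial_ne_zero]
  have hterm : ∀ j, f (j + n) = ζ ^ n / (n.factorial : ℂ) * ((c j : ℂ) * ζ₀ ^ j) := by
    intro j
    rw [hf, hc]
    simp only
    have hfac1 : ((j + n).factorial : ℂ) ≠ 0 := by exact_mod_cast (j+n).factorial_ne_zero
    have hfac2 : ((n).factorial : ℂ) ≠ 0 := by exact_mod_cast n.factorial_ne_zero
    have hζpow : ζ ^ (j + n) = (n:ℂ) ^ (j+n) * ζ₀ ^ (j + n) := by rw [hζ, mul_pow]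
    push_cast
    rw [hζpow, hζ, mul_pow]
    field_simp
    ring
  have heq : ∑ j ∈ range N, f (j + n)
      = ζ ^ n / (n.factorial : ℂ) * ∑ j ∈ range N, (c j : ℂ) * ζ₀ ^ j := by
    rw [Finset.mul_sum]
    exact Finset.sum_congr rfl fun j _ => hterm j
  rw [heq, norm_mul]
  have hnorm : ‖ζ ^ n / (n.factorial : ℂ)‖ = ((n:ℝ) * ‖ζ₀‖) ^ n / (n.factorial : ℝ) := by
    rw [norm_div, norm_pow, hζ, norm_mul, Complex.norm_natCast, Complex.norm_natCast]
  rw [hnorm]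
  have habel := abel_bound_s15 c hcmono hcnn ζ₀ (2 / e)
    (fun m => geom_partial_bound_s15 hr he hqe m) N
  rw [hc0, one_mul] at habel
  gcongr

lemma aux_div_eq (A B P Z zm zn : ℂ) (hA : A ≠ 0) (hB : B ≠ 0) (hP : P ≠ 0) (hZ : Z ≠ 0)
    (hpow : zm * Z = zn) :
    zm / A = zn / B * (B / (A * P) * (P / Z)) := by
  field_simp
  linear_combination hpow

lemma sn_bound_of_one_le (n : ℕ) (hn : 1 ≤ n) (ζ₀ : ℂ) (hr1 : 1 ≤ ‖ζ₀‖) (hr2 : ‖ζ₀‖ ≤ 2)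
    {e : ℝ} (he : 0 < e) (hqe : e ≤ ‖ζ₀ - 1‖) :
    ‖∑ k ∈ range n, ((n:ℂ) * ζ₀) ^ k / (k.factorial : ℂ)‖ ≤
      ((n:ℝ) * ‖ζ₀‖) ^ n / n.factorial * (4 / e) := by
  set ζ : ℂ := (n:ℂ) * ζ₀ with hζ
  have hζ₀ne : ζ₀ ≠ 0 := by
    intro h; rw [h] at hr1; simp at hr1; linarith
  have hnne : ((n:ℂ)) ≠ 0 := Nat.cast_ne_zero.mpr (by omega)
  set q : ℂ := ζ₀⁻¹ with hq
  have hqnorm : ‖q‖ ≤ 1 := by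
    rw [hq, norm_inv]
    rw [inv_le_one_iff₀]
    right; exact hr1
  have hqsub : e / 2 ≤ ‖q - 1‖ := by
    have hid : q - 1 = (1 - ζ₀) * ζ₀⁻¹ := by
      rw [hq]; field_simp
    rw [hid, norm_mul, norm_inv]
    have h1 : ‖(1:ℂ) - ζ₀‖ = ‖ζ₀ - 1‖ := norm_sub_rev _ _
    rw [h1]
    have h2 : (2:ℝ)⁻¹ ≤ ‖ζ₀‖⁻¹ := by
      apply inv_anti₀ (by linarith) hr2
    calc e / 2 = e * (2:ℝ)⁻¹ := by ring
      _ ≤ ‖ζ₀ - 1‖ * ‖ζ₀‖⁻¹ := by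
          apply mul_le_mul hqe h2 (by norm_num) (norm_nonneg _)
  set c : ℕ → ℝ := fun j => ((n-1).factorial : ℝ) / (((n-1-j).factorial : ℝ) * (n:ℝ) ^ j) with hc
  have hcmono : ∀ j, c (j + 1) ≤ c j := by
    intro j
    rw [hc]; simp only
    apply div_le_div_of_nonneg_left (by positivity) (by positivity)
    -- need (n-1-j)! * n^j ≤ (n-1-(j+1))! * n^(j+1)
    have key : (n-1-j).factorial ≤ n * (n-1-(j+1)).factorial := by
      rcases Nat.eq_zero_or_pos (n-1-j) with h | h
      · rw [h]; simp [Nat.factorial]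
        have : n - 1 - (j+1) = 0 := by omega
        rw [this]; simpa [Nat.factorial] using hn
      · have h1 : n - 1 - j = (n - 1 - (j+1)) + 1 := by omega
        rw [h1, Nat.factorial_succ]
        have h2 : n - 1 - (j+1) + 1 ≤ n := by omega
        exact Nat.mul_le_mul_right _ h2
    have keyR : ((n-1-j).factorial : ℝ) ≤ (n:ℝ) * ((n-1-(j+1)).factorial : ℝ) := by
      exact_mod_cast key
    calc ((n-1-j).factorial : ℝ) * (n:ℝ) ^ j
        ≤ ((n:ℝ) * ((n-1-(j+1)).factorial : ℝ)) * (n:ℝ) ^ j := by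
          apply mul_le_mul_of_nonneg_right keyR (by positivity)
      _ = ((n-1-(j+1)).factorial : ℝ) * (n:ℝ) ^ (j+1) := by ring
  have hcnn : ∀ j, 0 ≤ c j := fun j => by rw [hc]; positivity
  have hc0 : c 0 = 1 := by
    rw [hc]; simp only [pow_zero, Nat.sub_zero, mul_one]
    exact div_self (by positivity)
  have hterm : ∀ j ∈ range n, ζ ^ (n-1-j) / ((n-1-j).factorial : ℂ)
      = ζ ^ (n-1) / ((n-1).factorial : ℂ) * ((c j : ℂ) * q ^ j) := by
    intro j hj
    rw [mem_range] at hj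
    have hjle : j ≤ n - 1 := by omega
    have hζne : ζ ≠ 0 := mul_ne_zero hnne hζ₀ne
    have hpow : ζ ^ (n-1-j) * ζ ^ j = ζ ^ (n-1) := by
      rw [← pow_add]; congr 1; omega
    have hfac1 : (((n-1-j).factorial : ℝ) : ℂ) ≠ 0 := by
      exact_mod_cast Nat.cast_ne_zero.mpr (n-1-j).factorial_ne_zero
    have hfac2 : (((n-1).factorial : ℝ) : ℂ) ≠ 0 := by
      exact_mod_cast Nat.cast_ne_zero.mpr (n-1).factorial_ne_zero
    rw [hc, hq]
    simp only
    push_cast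
    have hqpow : (ζ₀⁻¹) ^ j = ((n:ℂ)) ^ j / ζ ^ j := by
      rw [hζ, mul_pow, inv_pow]
      field_simp
    rw [hqpow]
    exact aux_div_eq _ _ _ _ _ _ hfac1 hfac2 (pow_ne_zero _ hnne) (pow_ne_zero _ hζne) hpow
  have hreflect : ∑ k ∈ range n, ζ ^ k / (k.factorial : ℂ)
      = ∑ j ∈ range n, ζ ^ (n-1-j) / ((n-1-j).factorial : ℂ) := by
    rw [Finset.sum_range_reflect (fun k => ζ ^ k / (k.factorial : ℂ)) n]
  rw [hreflect]
  have heq : ∑ j ∈ range n, ζ ^ (n-1-j) / ((n-1-j).factorial : ℂ)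
      = ζ ^ (n-1) / ((n-1).factorial : ℂ) * ∑ j ∈ range n, (c j : ℂ) * q ^ j := by
    rw [Finset.mul_sum]
    exact Finset.sum_congr rfl hterm
  rw [heq, norm_mul]
  have habel := abel_bound_s15 c hcmono hcnn q (2 / (e/2))
    (fun m => geom_partial_bound_s15 hqnorm (by linarith) hqsub m) n
  rw [hc0, one_mul] at habel
  have hB4 : (2:ℝ) / (e/2) = 4 / e := by field_simp; ring
  rw [hB4] at habel
  have hnormA : ‖ζ ^ (n-1) / ((n-1).factorial : ℂ)‖
      = ((n:ℝ) * ‖ζ₀‖) ^ (n-1) / ((n-1).factorial : ℝ) := by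
    rw [norm_div, norm_pow, hζ, norm_mul, Complex.norm_natCast, Complex.norm_natCast]
  have hstep : ((n:ℝ) * ‖ζ₀‖) ^ (n-1) / ((n-1).factorial : ℝ)
      ≤ ((n:ℝ) * ‖ζ₀‖) ^ n / (n.factorial : ℝ) := by
    have hnR : (0:ℝ) < n := by exact_mod_cast hn
    have hfac : (n.factorial : ℝ) = (n:ℝ) * ((n-1).factorial : ℝ) := by
      obtain ⟨m, rfl⟩ : ∃ m, n = m + 1 := ⟨n - 1, by omega⟩
      simp [Nat.factorial_succ]
    have hpow : ((n:ℝ) * ‖ζ₀‖) ^ n = ((n:ℝ) * ‖ζ₀‖) ^ (n-1) * ((n:ℝ) * ‖ζ₀‖) := by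
      rw [← pow_succ]; congr 1; omega
    rw [hfac, hpow]
    rw [div_le_div_iff₀ (by positivity) (by positivity)]
    have hfp : (0:ℝ) < ((n-1).factorial : ℝ) := by positivity
    have h1 : (1:ℝ) ≤ ‖ζ₀‖ := hr1
    have hA : (0:ℝ) ≤ ((n:ℝ) * ‖ζ₀‖) ^ (n-1) := by positivity
    calc ((n:ℝ) * ‖ζ₀‖) ^ (n-1) * ((n:ℝ) * ((n-1).factorial : ℝ))
        = (((n:ℝ) * ‖ζ₀‖) ^ (n-1) * (n:ℝ) * ((n-1).factorial : ℝ)) * 1 := by ring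
      _ ≤ (((n:ℝ) * ‖ζ₀‖) ^ (n-1) * (n:ℝ) * ((n-1).factorial : ℝ)) * ‖ζ₀‖ := by
          apply mul_le_mul_of_nonneg_left h1 (by positivity)
      _ = ((n:ℝ) * ‖ζ₀‖) ^ (n-1) * ((n:ℝ) * ‖ζ₀‖) * ((n-1).factorial : ℝ) := by ring
  have hfinal : ‖ζ ^ (n-1) / ((n-1).factorial : ℂ)‖ * ‖∑ j ∈ range n, (c j : ℂ) * q ^ j‖
      ≤ ((n:ℝ) * ‖ζ₀‖) ^ (n-1) / ((n-1).factorial : ℝ) * (4/e) := by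
    rw [hnormA]
    exact mul_le_mul_of_nonneg_left habel (by positivity)
  exact hfinal.trans (mul_le_mul_of_nonneg_right hstep (by positivity))

/-- master bound on the partial sum -/
lemma sn_master (n : ℕ) (hn : 1 ≤ n) (ζ₀ : ℂ) (hr2 : ‖ζ₀‖ ≤ 2)
    {e : ℝ} (he : 0 < e) (hqe : e ≤ ‖ζ₀ - 1‖) :
    ‖∑ k ∈ range n, ((n:ℂ) * ζ₀) ^ k / (k.factorial : ℂ)‖ ≤
      Real.exp ((n:ℝ) * ζ₀.re) + ((n:ℝ) * ‖ζ₀‖) ^ n / n.factorial * (4 / e) := by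
  rcases le_or_gt 1 ‖ζ₀‖ with hr1 | hr1
  · have h := sn_bound_of_one_le n hn ζ₀ hr1 hr2 he hqe
    have : (0:ℝ) ≤ Real.exp ((n:ℝ) * ζ₀.re) := (Real.exp_pos _).le
    linarith
  · have h := tail_bound n ζ₀ hr1.le he hqe
    have hnorm_exp : ‖Complex.exp ((n:ℂ) * ζ₀)‖ = Real.exp ((n:ℝ) * ζ₀.re) := by
      rw [Complex.norm_exp]
      congr 1
      simp [Complex.mul_re]
    calc ‖∑ k ∈ range n, ((n:ℂ) * ζ₀) ^ k / (k.factorial : ℂ)‖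
        = ‖Complex.exp ((n:ℂ) * ζ₀) -
            (Complex.exp ((n:ℂ) * ζ₀) - ∑ k ∈ range n, ((n:ℂ) * ζ₀) ^ k / (k.factorial : ℂ))‖ := by
          congr 1; ring
      _ ≤ ‖Complex.exp ((n:ℂ) * ζ₀)‖ +
            ‖Complex.exp ((n:ℂ) * ζ₀) - ∑ k ∈ range n, ((n:ℂ) * ζ₀) ^ k / (k.factorial : ℂ)‖ :=
          norm_sub_le _ _
      _ ≤ Real.exp ((n:ℝ) * ζ₀.re) + ((n:ℝ) * ‖ζ₀‖) ^ n / n.factorial * (4 / e) := by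
          rw [hnorm_exp]
          gcongr
          refine h.trans ?_
          have h24 : (2:ℝ)/e ≤ 4/e := by gcongr <;> norm_num
          exact mul_le_mul_of_nonneg_left h24 (by positivity)

set_option maxHeartbeats 1000000 in
/-- Kernel estimate near the diagonal `z w̄ = 1`: for every `M ≥ 1` there are `δ > 0` and
`C` with `|K_n(z,w)| ≤ C n (e^{−n|z−w|²/2} + 1/(1 + √n |z w̄ − 1|))` whenever `|z| ≤ 2`,
`|w| ≤ 2` and `M/√n ≤ |z w̄ − 1| ≤ δ`. -/
theorem ginibreKernel_estimate_near_one (M : ℝ) (hM : 1 ≤ M) :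
    ∃ δ : ℝ, 0 < δ ∧ ∃ C : ℝ, ∀ n : ℕ, 1 ≤ n → ∀ z w : ℂ,
      ‖z‖ ≤ 2 → ‖w‖ ≤ 2 →
      M / Real.sqrt n ≤ ‖z * (starRingEnd ℂ) w - 1‖ →
      ‖z * (starRingEnd ℂ) w - 1‖ ≤ δ →
      ‖ginibreKernel n z w‖ ≤
        C * n * (Real.exp (-(n : ℝ) * ‖z - w‖ ^ 2 / 2) +
          1 / (1 + Real.sqrt n * ‖z * (starRingEnd ℂ) w - 1‖)) := by
  refine ⟨1, one_pos, 8, fun n hn z w hz hw hlow hupp => ?_⟩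
  set ζ₀ : ℂ := z * (starRingEnd ℂ) w with hζ₀
  set a : ℝ := ‖z‖ with ha
  set b : ℝ := ‖w‖ with hb
  set r : ℝ := ‖ζ₀‖ with hr
  set ε : ℝ := ‖ζ₀ - 1‖ with hε
  have hnR : (1:ℝ) ≤ (n:ℝ) := by exact_mod_cast hn
  have hsn : (0:ℝ) < Real.sqrt n := Real.sqrt_pos.mpr (by linarith)
  have hsn1 : (1:ℝ) ≤ Real.sqrt n := by
    rw [show (1:ℝ) = Real.sqrt 1 by simp]
    exact Real.sqrt_le_sqrt (by linarith)
  have hM' : M ≤ Real.sqrt n * ε := by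
    rw [div_le_iff₀ hsn] at hlow
    linarith [hlow]
  have hε0 : 0 < ε := by nlinarith
  have h1ε : 1 ≤ Real.sqrt n * ε := le_trans hM hM'
  have hr2 : r ≤ 2 := by
    calc r = ‖(ζ₀ - 1) + 1‖ := by rw [sub_add_cancel, hr]
      _ ≤ ε + ‖(1:ℂ)‖ := norm_add_le _ _
      _ ≤ 2 := by simp; linarith
  -- |kernel| decomposition
  have hker : ‖ginibreKernel n z w‖
      = (n:ℝ) * ‖∑ k ∈ range n, ((n:ℂ) * ζ₀) ^ k / (k.factorial : ℂ)‖ *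
        Real.exp (-(n:ℝ) * (a^2 + b^2) / 2) := by
    rw [ginibreKernel]
    have hexp : (-(n : ℂ) * (((‖z‖ : ℝ) : ℂ) ^ 2 + ((‖w‖ : ℝ) : ℂ) ^ 2) / 2)
        = ((-(n:ℝ) * (a^2 + b^2) / 2 : ℝ) : ℂ) := by rw [ha, hb]; push_cast; ring
    rw [norm_mul, norm_mul, hexp, Complex.norm_exp, Complex.ofReal_re, Complex.norm_natCast]
    congr 2
    congr 1
    apply Finset.sum_congr rfl
    intro k _
    rw [mul_assoc]
  -- master bound
  have hmaster := sn_master n hn ζ₀ (by exact hr2) hε0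
    (le_of_eq (by rw [hε]))
  simp only [← hr] at hmaster
  -- identity for |z-w|^2
  have hid : (‖z - w‖)^2 = a^2 + b^2 - 2*ζ₀.re := by
    rw [ha, hb, Complex.sq_norm, Complex.sq_norm, Complex.sq_norm, hζ₀]
    simp only [Complex.normSq_apply, Complex.sub_re, Complex.sub_im, Complex.mul_re,
      Complex.mul_im, Complex.conj_re, Complex.conj_im]
    ring
  have hterm1 : Real.exp ((n:ℝ) * ζ₀.re) * Real.exp (-(n:ℝ) * (a^2 + b^2) / 2)
      = Real.exp (-(n:ℝ) * (‖z - w‖)^2 / 2) := by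
    rw [← Real.exp_add]
    congr 1
    rw [hid]; ring
  -- Stirling chain
  have hfp : (0:ℝ) < (n.factorial : ℝ) := by positivity
  have p1 : (n:ℝ)^n ≤ (n.factorial : ℝ) * Real.exp n / Real.sqrt n := by
    have h := factorial_lower n hn
    have hone : Real.exp 1 ^ n = Real.exp n := by
      rw [← Real.exp_nat_mul]; norm_num
    rw [div_pow, hone] at h
    have h2 : Real.sqrt n * (n:ℝ)^n / Real.exp n ≤ (n.factorial : ℝ) := by
      rw [mul_div_assoc]; exact h
    rw [div_le_iff₀ (Real.exp_pos _)] at h2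
    rw [le_div_iff₀ hsn]
    nlinarith [h2]
  have p2 : r^n ≤ Real.exp ((n:ℝ)*(r-1)) := by
    have h1 : r ≤ Real.exp (r - 1) := by
      have := Real.add_one_le_exp (r - 1)
      linarith
    calc r^n ≤ (Real.exp (r-1))^n := by
          apply pow_le_pow_left₀ (norm_nonneg _) h1
      _ = Real.exp ((n:ℝ)*(r-1)) := by rw [← Real.exp_nat_mul]
  have p3 : Real.exp (-(n:ℝ) * (a^2 + b^2) / 2) ≤ Real.exp (-(n:ℝ)*r) := by
    apply Real.exp_le_exp.mpr
    have hab : a * b = r := by rw [ha, hb, hr, hζ₀, norm_mul, Complex.norm_conj]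
    nlinarith [sq_nonneg (a - b), hnR]
  have hexpprod : Real.exp (n:ℝ) * Real.exp ((n:ℝ)*(r-1)) * Real.exp (-(n:ℝ)*r) = 1 := by
    rw [← Real.exp_add, ← Real.exp_add,
      show (n:ℝ) + (n:ℝ)*(r-1) + (-(n:ℝ)*r) = 0 by ring, Real.exp_zero]
  have key2 : ((n:ℝ)*r)^n / (n.factorial:ℝ) * Real.exp (-(n:ℝ) * (a^2 + b^2) / 2)
      ≤ 1 / Real.sqrt n := by
    calc ((n:ℝ)*r)^n / (n.factorial:ℝ) * Real.exp (-(n:ℝ) * (a^2 + b^2) / 2)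
        = (n:ℝ)^n * r^n * Real.exp (-(n:ℝ) * (a^2 + b^2) / 2) / (n.factorial:ℝ) := by
          rw [mul_pow]; ring
      _ ≤ ((n.factorial:ℝ) * Real.exp n / Real.sqrt n) * Real.exp ((n:ℝ)*(r-1)) *
            Real.exp (-(n:ℝ)*r) / (n.factorial:ℝ) := by
          gcongr
      _ = (1/Real.sqrt n) * ((n.factorial:ℝ)/(n.factorial:ℝ)) *
            (Real.exp (n:ℝ) * Real.exp ((n:ℝ)*(r-1)) * Real.exp (-(n:ℝ)*r)) := by ring
      _ = 1/Real.sqrt n := by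
          rw [hexpprod, div_self (ne_of_gt hfp)]; ring
  -- final combination
  have hnn : Real.sqrt n * Real.sqrt n = (n:ℝ) := Real.mul_self_sqrt (by positivity)
  have hden : (0:ℝ) < 1 + Real.sqrt n * ε := by positivity
  have hlast : (4/ε) * ((n:ℝ) * (1 / Real.sqrt n)) ≤ 8 * (n:ℝ) * (1/(1 + Real.sqrt n * ε)) := by
    rw [show (4/ε) * ((n:ℝ) * (1 / Real.sqrt n)) = 4 * (n:ℝ) / (Real.sqrt n * ε) by
      field_simp]
    rw [show (8:ℝ) * (n:ℝ) * (1/(1 + Real.sqrt n * ε)) = 8 * n / (1 + Real.sqrt n * ε) by ring]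
    rw [div_le_div_iff₀ (by positivity) hden]
    nlinarith [h1ε, hsn, hε0, hnR, hnn, mul_pos hsn hε0]
  have hSnn : (0:ℝ) ≤ ‖∑ k ∈ range n, ((n:ℂ) * ζ₀) ^ k / (k.factorial : ℂ)‖ :=
    norm_nonneg _
  have hEnn : (0:ℝ) ≤ Real.exp (-(n:ℝ) * (a^2 + b^2) / 2) := (Real.exp_pos _).le
  calc ‖ginibreKernel n z w‖
      = (n:ℝ) * ‖∑ k ∈ range n, ((n:ℂ) * ζ₀) ^ k / (k.factorial : ℂ)‖ *
        Real.exp (-(n:ℝ) * (a^2 + b^2) / 2) := hker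
    _ ≤ (n:ℝ) * (Real.exp ((n:ℝ) * ζ₀.re) + ((n:ℝ) * r) ^ n / n.factorial * (4 / ε)) *
        Real.exp (-(n:ℝ) * (a^2 + b^2) / 2) := by
        apply mul_le_mul_of_nonneg_right _ hEnn
        apply mul_le_mul_of_nonneg_left hmaster (by positivity)
    _ = (n:ℝ) * (Real.exp ((n:ℝ) * ζ₀.re) * Real.exp (-(n:ℝ) * (a^2 + b^2) / 2)) +
        (4/ε) * ((n:ℝ) * (((n:ℝ) * r) ^ n / n.factorial *
          Real.exp (-(n:ℝ) * (a^2 + b^2) / 2))) := by ring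
    _ ≤ (n:ℝ) * Real.exp (-(n:ℝ) * (‖z - w‖)^2 / 2) +
        (4/ε) * ((n:ℝ) * (1 / Real.sqrt n)) := by
        rw [hterm1]
        have := mul_le_mul_of_nonneg_left key2 (show (0:ℝ) ≤ (n:ℝ) by linarith)
        have h4 : (0:ℝ) ≤ 4/ε := by positivity
        nlinarith [this, h4]
    _ ≤ (n:ℝ) * Real.exp (-(n:ℝ) * (‖z - w‖)^2 / 2) +
        8 * (n:ℝ) * (1/(1 + Real.sqrt n * ε)) := by linarith
    _ ≤ 8 * (n:ℝ) * (Real.exp (-(n:ℝ) * (‖z - w‖)^2 / 2) +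
        1 / (1 + Real.sqrt n * ε)) := by
        nlinarith [Real.exp_pos (-(n:ℝ) * (‖z - w‖)^2 / 2), hnR]
end
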